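/- Let M be a monoid and let M⁰ denote the monoid obtained from M by adjoining a new zero element 0 (so 0x=x0=0 for all x∈M⁰). If the diagonal M-act is generated by a set U×U with U⊆M, then the diagonal M⁰-act is generated by the set Z = ((U∪{0})×(U∪{0})) ∖ {(0,0)}. -/

import Mathlib

/-- The axioms for a right action of a monoid `M` on a set `A`:
`act a 1 = a` and `act a (m * n) = act (act a m) n`. -/
def IsAct {M A : Type*} [Monoid M] (act : A → M → A) : Prop :=
  (∀ a, act a 1 = a) ∧ ∀ a m n, act a (m * n) = act (act a m) n

/-- `U ⊆ A` is a generating set for the act `(A, act)`: every element of `A`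
has the form `u m` with `u ∈ U`, `m ∈ M`. -/
def Generates {M A : Type*} (act : A → M → A) (U : Set A) : Prop :=
  ∀ a : A, ∃ u ∈ U, ∃ m : M, act u m = a

/-- An act is finitely generated if it has a finite generating set. -/
def ActFG {M A : Type*} (act : A → M → A) : Prop :=
  ∃ U : Set A, U.Finite ∧ Generates act U

/-- The free `M`-act on a set `X`: the set `X × M` with action `(x, m) n = (x, m n)`. -/
def FreeAct (M : Type*) [Monoid M] (X : Type*) : X × M → M → X × M :=
  fun p m => (p.1, p.2 * m)

/-- The congruence on the act `(A, act)` generated by a set `R ⊆ A × A`: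
the smallest equivalence relation containing `R` that is compatible with the action. -/
def CongGen {M A : Type*} (act : A → M → A) (R : Set (A × A)) (a b : A) : Prop :=
  ∀ r : A → A → Prop, Equivalence r →
    (∀ x y (m : M), r x y → r (act x m) (act y m)) →
    (∀ p ∈ R, r p.1 p.2) → r a b

/-- An `M`-act `(A, act)` is finitely presented if it is defined by a presentation
`⟨X | R⟩` with `X` and `R` finite, i.e. there is a surjective `M`-equivariant map
`π : F_X → A` whose kernel is the congruence on `F_X` generated by `R`. -/
def ActFP (M : Type*) [Monoid M] {A : Type*} (act : A → M → A) : Prop :=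
  ∃ (X : Type) (_ : Finite X) (R : Set ((X × M) × (X × M))), R.Finite ∧
    ∃ π : X × M → A, Function.Surjective π ∧
      (∀ p m, π (FreeAct M X p m) = act (π p) m) ∧
      ∀ w₁ w₂ : X × M, π w₁ = π w₂ ↔ CongGen (FreeAct M X) R w₁ w₂

/-- The diagonal `M`-act: `M × M` with action `(a, b) c = (a c, b c)`. -/
def DiagAct (M : Type*) [Monoid M] : M × M → M → M × M :=
  fun p c => (p.1 * c, p.2 * c)

/-- If the diagonal `M`-act is generated by a set `U × U` with `U ⊆ M`, then the
diagonal `M⁰`-act is generated by `((U ∪ {0}) × (U ∪ {0})) \ {(0, 0)}`,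
where `M⁰ = WithZero M` is `M` with a zero adjoined. -/
theorem stmt2 {M : Type*} [Monoid M] (U : Set M)
    (h : Generates (DiagAct M) (U ×ˢ U)) :
    Generates (DiagAct (WithZero M))
      ((((fun m : M => (m : WithZero M)) '' U ∪ {0}) ×ˢ
          ((fun m : M => (m : WithZero M)) '' U ∪ {0})) \
        {((0 : WithZero M), (0 : WithZero M))}) := by

  rintro ⟨a, b⟩
  obtain ⟨⟨u1, u2⟩, ⟨hu1, hu2⟩, c1, hc1⟩ := h (1, 1)
  induction a using WithZero.recZeroCoe with
  | zero =>
    induction b using WithZero.recZeroCoe with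
    | zero =>
      refine ⟨(↑u1, 0), ?_, 0, ?_⟩
      · constructor
        · exact ⟨Or.inl ⟨u1, hu1, rfl⟩, Or.inr rfl⟩
        · simp
      · simp [DiagAct]
    | coe y =>
      obtain ⟨⟨v1, v2⟩, ⟨hv1, hv2⟩, c, hc⟩ := h (y, y)
      refine ⟨(0, ↑v1), ?_, ↑c, ?_⟩
      · constructor
        · exact ⟨Or.inr rfl, Or.inl ⟨v1, hv1, rfl⟩⟩
        · simp
      · have : v1 * c = y := congrArg Prod.fst hc
        simp [DiagAct, ← WithZero.coe_mul, this]
  | coe x =>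
    induction b using WithZero.recZeroCoe with
    | zero =>
      obtain ⟨⟨v1, v2⟩, ⟨hv1, hv2⟩, c, hc⟩ := h (x, x)
      refine ⟨(↑v1, 0), ?_, ↑c, ?_⟩
      · constructor
        · exact ⟨Or.inl ⟨v1, hv1, rfl⟩, Or.inr rfl⟩
        · simp
      · have : v1 * c = x := congrArg Prod.fst hc
        simp [DiagAct, ← WithZero.coe_mul, this]
    | coe y =>
      obtain ⟨⟨v1, v2⟩, ⟨hv1, hv2⟩, c, hc⟩ := h (x, y)
      refine ⟨(↑v1, ↑v2), ?_, ↑c, ?_⟩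
      · constructor
        · exact ⟨Or.inl ⟨v1, hv1, rfl⟩, Or.inl ⟨v2, hv2, rfl⟩⟩
        · simp
      · have h1 : v1 * c = x := congrArg Prod.fst hc
        have h2 : v2 * c = y := congrArg Prod.snd hc
        simp [DiagAct, ← WithZero.coe_mul, h1, h2]
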